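/- Let ψ : G → G be a commutator-central endomorphism of a group G and let α ∈ 𝓔. Then for all g ∈ G, the element ψ_α(g⁻¹) · ψ_α(g) lies in the center Z(G); that is, ψ_α(g)⁻¹ ≡ ψ_α(g⁻¹) modulo Z(G). -/

import Mathlib

/-- Evaluation of an element of the free group `𝓔 = FreeGroup (Monoid.End G)`
at an element `g : G`: the image of `α` under the homomorphism `𝓔 → G`
given by `FreeGroup.lift (fun φ => φ g)`. -/
def evalE {G : Type*} [Group G] (α : FreeGroup (Monoid.End G)) (g : G) : G :=
  FreeGroup.lift (fun φ : Monoid.End G => φ g) α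

open scoped commutatorElement

private lemma evalE_mul {G : Type*} [Group G] (α β : FreeGroup (Monoid.End G)) (g : G) :
    evalE (α * β) g = evalE α g * evalE β g := map_mul _ _ _

private lemma evalE_inv {G : Type*} [Group G] (α : FreeGroup (Monoid.End G)) (g : G) :
    evalE α⁻¹ g = (evalE α g)⁻¹ := map_inv _ _

private lemma f_comm {G : Type*} [Group G]
    (ψ : Monoid.End G) (hψ : ∀ g h : G, ψ ⁅g, h⁆ ∈ Subgroup.center G) (x y : G) :
    (QuotientGroup.mk' (Subgroup.center G)) (ψ x) * (QuotientGroup.mk' (Subgroup.center G)) (ψ y)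
      = (QuotientGroup.mk' (Subgroup.center G)) (ψ y) * (QuotientGroup.mk' (Subgroup.center G)) (ψ x) := by
  have h : (QuotientGroup.mk' (Subgroup.center G)) (ψ ⁅x, y⁆) = 1 := by
    rw [QuotientGroup.mk'_apply, QuotientGroup.eq_one_iff]
    exact hψ x y
  rw [commutatorElement_def] at h
  simp only [map_mul, map_inv] at h
  rw [← commutatorElement_def] at h
  exact commutatorElement_eq_one_iff_mul_comm.mp h

private lemma key {G : Type*} [Group G]
    (ψ : Monoid.End G) (hψ : ∀ g h : G, ψ ⁅g, h⁆ ∈ Subgroup.center G)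
    (α : FreeGroup (Monoid.End G)) (g : G) :
    (QuotientGroup.mk' (Subgroup.center G)) (ψ (evalE α g⁻¹))
      = ((QuotientGroup.mk' (Subgroup.center G)) (ψ (evalE α g)))⁻¹ := by
  induction α using FreeGroup.induction_on with
  | C1 => simp [evalE]
  | of φ =>
      have hp : (pure φ : FreeGroup (Monoid.End G)) = FreeGroup.of φ := rfl
      simp [evalE, hp, FreeGroup.lift_apply_of, map_inv]
  | inv_of φ ih =>
      rw [evalE_inv, evalE_inv, map_inv, map_inv, map_inv, map_inv] at *
      simp_all
  | mul a b iha ihb =>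
      rw [evalE_mul, evalE_mul, map_mul, map_mul, map_mul, map_mul, iha, ihb,
        ← mul_inv_rev, f_comm ψ hψ]

/-- `ψ_α(g)⁻¹ ≡ ψ_α(g⁻¹)` modulo the center. -/
theorem psiAlpha_inv_mod_center {G : Type*} [Group G]
    (ψ : Monoid.End G) (hψ : ∀ g h : G, ψ ⁅g, h⁆ ∈ Subgroup.center G)
    (α : FreeGroup (Monoid.End G)) (g : G) :
    ψ (evalE α g⁻¹) * ψ (evalE α g) ∈ Subgroup.center G := by
  rw [← QuotientGroup.eq_one_iff (N := Subgroup.center G)]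
  have h := key ψ hψ α g
  simp only [QuotientGroup.mk'_apply] at h
  rw [QuotientGroup.mk_mul, h, inv_mul_cancel]
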